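/- arXiv:2310.14537 — 2 statements merged into one kernel-verified Lean document; each statement's English description precedes it below -/
import Mathlib

section
/- For the Poisson distribution of order k, the probability of the value 0 is e^{−kλ}, and for 1 ≤ n ≤ k the probability mass at n is e^{−kλ} · ∑_{j=1}^{n} C(n−1, j−1) λ^j / j!. -/
open scoped BigOperators

/-- The probability mass function of the Poisson distribution of order `k`
with rate `lam`: the law of `Y = ∑_{i=1}^k i · N_i` where the `N_i` are
i.i.d. Poisson(`lam`). -/
noncomputable def poissonOrderKPMF (k : ℕ) (lam : ℝ) (n : ℕ) : ℝ :=
  ∑' m : Fin k → ℕ,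
    if (∑ i : Fin k, (i.1 + 1) * m i) = n then
      ∏ i : Fin k, Real.exp (-lam) * lam ^ (m i) / (Nat.factorial (m i))
    else 0

section Aux
open Finset PowerSeries

-- geometric series truncation agrees with mk 1 powers in low coefficients
lemma aux_coeff_geom_pow (k j m : ℕ) (hm : m < k) :
    (PowerSeries.coeff m) ((∑ i ∈ Finset.range k, (PowerSeries.X : ℝ⟦X⟧) ^ i) ^ j)
      = (PowerSeries.coeff m) ((PowerSeries.mk 1 : ℝ⟦X⟧) ^ j) := by
  have hdvd : (PowerSeries.X : ℝ⟦X⟧) ^ k ∣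
      (PowerSeries.mk 1 : ℝ⟦X⟧) - ∑ i ∈ Finset.range k, (PowerSeries.X : ℝ⟦X⟧) ^ i := by
    rw [PowerSeries.X_pow_dvd_iff]
    intro d hd
    simp only [map_sub, PowerSeries.coeff_mk, Pi.one_apply, map_sum, PowerSeries.coeff_X_pow]
    rw [Finset.sum_ite_eq (Finset.range k) d (fun _ => (1:ℝ))]
    simp [Finset.mem_range.mpr hd]
  have h2 : (PowerSeries.X : ℝ⟦X⟧) ^ k ∣
      (PowerSeries.mk 1 : ℝ⟦X⟧) ^ j - (∑ i ∈ Finset.range k, (PowerSeries.X : ℝ⟦X⟧) ^ i) ^ j :=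
    hdvd.trans (sub_dvd_pow_sub_pow _ _ j)
  have := (PowerSeries.X_pow_dvd_iff.mp h2) m hm
  rw [map_sub, sub_eq_zero] at this
  exact this.symm

lemma aux_coeff_key (k j n : ℕ) (hj : 1 ≤ j) (hjn : j ≤ n) (hnk : n ≤ k) :
    (PowerSeries.coeff n) ((∑ i ∈ Finset.range k, (PowerSeries.X : ℝ⟦X⟧) ^ (i+1)) ^ j)
      = ((n-1).choose (j-1) : ℝ) := by
  have hfact : (∑ i ∈ Finset.range k, (PowerSeries.X : ℝ⟦X⟧) ^ (i+1))
      = PowerSeries.X * ∑ i ∈ Finset.range k, (PowerSeries.X : ℝ⟦X⟧) ^ i := by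
    rw [Finset.mul_sum]
    exact Finset.sum_congr rfl fun i _ => by ring
  rw [hfact, mul_pow]
  have hn : n = (n - j) + j := by omega
  rw [hn, PowerSeries.coeff_X_pow_mul]
  rw [aux_coeff_geom_pow k j (n - j) (by omega)]
  obtain ⟨d, rfl⟩ : ∃ d, j = d + 1 := ⟨j - 1, by omega⟩
  rw [PowerSeries.mk_one_pow_eq_mk_choose_add, PowerSeries.coeff_mk]
  norm_num
  congr 1
  omega

lemma aux_coeff_multinomial (k j n : ℕ) :
    (PowerSeries.coeff n) ((∑ i ∈ Finset.range k, (PowerSeries.X : ℝ⟦X⟧) ^ (i+1)) ^ j)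
      = ∑ m ∈ (Finset.piAntidiag (Finset.univ : Finset (Fin k)) j).filter
          (fun m => ∑ i : Fin k, (i.1 + 1) * m i = n),
          (Nat.multinomial Finset.univ m : ℝ) := by
  rw [← Fin.sum_univ_eq_sum_range (fun i => (PowerSeries.X : ℝ⟦X⟧) ^ (i+1)) k]
  rw [Finset.sum_pow_eq_sum_piAntidiag]
  rw [map_sum, Finset.sum_filter]
  refine Finset.sum_congr rfl fun m hm => ?_
  have hprod : ∏ i : Fin k, ((PowerSeries.X : ℝ⟦X⟧) ^ (i.1+1)) ^ (m i)
      = (PowerSeries.X : ℝ⟦X⟧) ^ (∑ i : Fin k, (i.1 + 1) * m i) := by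
    rw [← Finset.prod_pow_eq_pow_sum]
    exact Finset.prod_congr rfl fun i _ => by rw [pow_mul]
  rw [hprod, ← nsmul_eq_mul, map_nsmul, PowerSeries.coeff_X_pow, nsmul_eq_mul]
  by_cases h : (∑ i : Fin k, (i.1 + 1) * m i) = n
  · simp [h]
  · simp [h, Ne.symm h]

lemma aux_count (k j n : ℕ) (hj : 1 ≤ j) (hjn : j ≤ n) (hnk : n ≤ k) :
    ∑ m ∈ (Finset.piAntidiag (Finset.univ : Finset (Fin k)) j).filter
        (fun m => ∑ i : Fin k, (i.1 + 1) * m i = n),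
        (Nat.multinomial Finset.univ m : ℝ) = ((n-1).choose (j-1) : ℝ) := by
  rw [← aux_coeff_multinomial, aux_coeff_key k j n hj hjn hnk]

lemma aux_prod_eq (k : ℕ) (lam : ℝ) (m : Fin k → ℕ) :
    ∏ i : Fin k, Real.exp (-lam) * lam ^ (m i) / (Nat.factorial (m i))
      = Real.exp (-(k * lam)) *
        (lam ^ (∑ i : Fin k, m i) * (Nat.multinomial Finset.univ m : ℝ)
          / (Nat.factorial (∑ i : Fin k, m i))) := by
  have h1 : ∀ i : Fin k, Real.exp (-lam) * lam ^ (m i) / (Nat.factorial (m i))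
      = Real.exp (-lam) * (lam ^ (m i) / (Nat.factorial (m i))) := fun i => by ring
  simp only [h1]
  rw [Finset.prod_mul_distrib, Finset.prod_const, Finset.card_univ, Fintype.card_fin]
  rw [← Real.exp_nat_mul]
  have h2 : (k : ℝ) * (-lam) = -(k * lam) := by ring
  rw [h2, Finset.prod_div_distrib, Finset.prod_pow_eq_pow_sum]
  congr 1
  have hspec := Nat.multinomial_spec (Finset.univ : Finset (Fin k)) m
  have hspecR : ((∏ i : Fin k, Nat.factorial (m i) : ℕ) : ℝ)
      * (Nat.multinomial Finset.univ m : ℝ) = (Nat.factorial (∑ i : Fin k, m i) : ℝ) := by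
    rw [← Nat.cast_mul, hspec]
  have hne1 : ((∏ i : Fin k, Nat.factorial (m i) : ℕ) : ℝ) ≠ 0 := by
    positivity
  have hne2 : (Nat.multinomial Finset.univ m : ℝ) ≠ 0 := by
    exact_mod_cast (Nat.multinomial_pos _ _).ne'
  rw [← hspecR]
  push_cast
  field_simp

end Aux

/-- For the Poisson distribution of order `k`, `p₀ = e^{-kλ}` and, for
`1 ≤ n ≤ k`, `pₙ = e^{-kλ} ∑_{j=1}^{n} C(n-1, j-1) λ^j / j!`. -/
theorem poissonOrderK_pmf_eq (k : ℕ) (hk : 1 ≤ k) (lam : ℝ) (hlam : 0 < lam) :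
    poissonOrderKPMF k lam 0 = Real.exp (-(k * lam)) ∧
    ∀ n : ℕ, 1 ≤ n → n ≤ k →
      poissonOrderKPMF k lam n =
        Real.exp (-(k * lam)) *
          ∑ j ∈ Finset.Icc 1 n,
            ((n - 1).choose (j - 1) : ℝ) * lam ^ j / (Nat.factorial j) := by
  constructor
  · -- n = 0 case
    rw [poissonOrderKPMF, tsum_eq_single (0 : Fin k → ℕ) ?_]
    · rw [if_pos (by simp)]
      simp only [Pi.zero_apply, pow_zero, Nat.factorial_zero, Nat.cast_one, mul_one, div_one]
      rw [Finset.prod_const, Finset.card_univ, Fintype.card_fin, ← Real.exp_nat_mul]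
      congr 1; ring
    · intro m hm
      rw [if_neg]
      intro hsum
      apply hm
      funext i
      have h := Finset.sum_eq_zero_iff.mp hsum i (Finset.mem_univ i)
      simpa using (Nat.mul_eq_zero.mp h).resolve_left (Nat.succ_ne_zero _)
  · intro n hn1 hnk
    classical
    set cond : (Fin k → ℕ) → Prop := fun m => ∑ i : Fin k, (i.1 + 1) * m i = n with hcond
    -- bound: under cond, each m i ≤ n
    have hbound : ∀ m : Fin k → ℕ, cond m → ∀ i : Fin k, m i ≤ n := by
      intro m hm i
      have h1 : (i.1 + 1) * m i ≤ ∑ i : Fin k, (i.1 + 1) * m i :=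
        Finset.single_le_sum (f := fun i : Fin k => (i.1 + 1) * m i)
          (fun j _ => Nat.zero_le _) (Finset.mem_univ i)
      rw [hm] at h1
      calc m i ≤ (i.1 + 1) * m i := Nat.le_mul_of_pos_left _ i.1.succ_pos
        _ ≤ n := h1
    have hT : ∀ m : Fin k → ℕ,
        m ∉ Fintype.piFinset (fun _ : Fin k => Finset.range (n+1)) →
        (if cond m then
          ∏ i : Fin k, Real.exp (-lam) * lam ^ (m i) / (Nat.factorial (m i))
        else 0) = 0 := by
      intro m hm
      rw [if_neg]
      intro hcm
      apply hm
      rw [Fintype.mem_piFinset]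
      intro i
      rw [Finset.mem_range]
      exact Nat.lt_succ_of_le (hbound m hcm i)
    rw [poissonOrderKPMF, tsum_eq_sum hT, ← Finset.sum_filter]
    -- rewrite each product term
    rw [Finset.sum_congr rfl (fun m _ => aux_prod_eq k lam m), ← Finset.mul_sum]
    congr 1
    -- fiberwise sum over j = ∑ m i
    have hmaps : ∀ m ∈ (Fintype.piFinset (fun _ : Fin k => Finset.range (n+1))).filter cond,
        (∑ i : Fin k, m i) ∈ Finset.Icc 1 n := by
      intro m hm
      rw [Finset.mem_filter] at hm
      have hc := hm.2
      rw [Finset.mem_Icc]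
      constructor
      · by_contra h
        push_neg at h
        rw [Nat.lt_one_iff] at h
        have h0 := Finset.sum_eq_zero_iff.mp h
        have hz : (∑ i : Fin k, (i.1 + 1) * m i) = 0 :=
          Finset.sum_eq_zero fun i _ => by rw [h0 i (Finset.mem_univ i), mul_zero]
        rw [hcond] at hc
        omega
      · calc (∑ i : Fin k, m i) ≤ ∑ i : Fin k, (i.1 + 1) * m i :=
            Finset.sum_le_sum fun i _ => Nat.le_mul_of_pos_left _ i.1.succ_pos
          _ = n := hc
    rw [← Finset.sum_fiberwise_of_maps_to hmaps
      (fun m => lam ^ (∑ i : Fin k, m i) * (Nat.multinomial Finset.univ m : ℝ)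
          / (Nat.factorial (∑ i : Fin k, m i)))]
    refine Finset.sum_congr rfl fun j hj => ?_
    rw [Finset.mem_Icc] at hj
    -- identify the fiber with piAntidiag filtered
    have hsetEq : ((Fintype.piFinset (fun _ : Fin k => Finset.range (n+1))).filter cond).filter
          (fun m => (∑ i : Fin k, m i) = j)
        = (Finset.piAntidiag (Finset.univ : Finset (Fin k)) j).filter cond := by
      ext m
      simp only [Finset.mem_filter, Fintype.mem_piFinset, Finset.mem_range,
        Finset.mem_piAntidiag, Finset.mem_univ, implies_true, and_true]
      constructor
      · rintro ⟨⟨-, hc⟩, hs⟩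
        exact ⟨hs, hc⟩
      · rintro ⟨hs, hc⟩
        exact ⟨⟨fun i => Nat.lt_succ_of_le (hbound m hc i), hc⟩, hs⟩
    rw [hsetEq]
    have hterm : ∀ m ∈ (Finset.piAntidiag (Finset.univ : Finset (Fin k)) j).filter cond,
        lam ^ (∑ i : Fin k, m i) * (Nat.multinomial Finset.univ m : ℝ)
          / (Nat.factorial (∑ i : Fin k, m i))
        = (Nat.multinomial Finset.univ m : ℝ) * (lam ^ j / (Nat.factorial j)) := by
      intro m hm
      rw [Finset.mem_filter, Finset.mem_piAntidiag] at hm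
      rw [hm.1.1]
      ring
    rw [Finset.sum_congr rfl hterm, ← Finset.sum_mul, aux_count k j n hj.1 hj.2 hnk]
    ring
end

section
/- For each integer k ≥ 2 there exists a unique λ > 0 satisfying e^{kλ}/2 = 1 + λ, and this λ lies in the interval ((ln 2)/k, (ln 2)/(k−1)]. -/
open Real Set

/-- For each integer `k ≥ 2` there is a unique `λ > 0` with `e^{kλ}/2 = 1 + λ`,
and this `λ` lies in `((ln 2)/k, (ln 2)/(k-1)]`. -/
theorem median_one_threshold_exists_unique (k : ℕ) (hk : 2 ≤ k) :
    (∃! lam : ℝ, 0 < lam ∧ Real.exp (k * lam) / 2 = 1 + lam) ∧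
    ∀ lam : ℝ, 0 < lam → Real.exp (k * lam) / 2 = 1 + lam →
      lam ∈ Set.Ioc (Real.log 2 / k) (Real.log 2 / ((k : ℝ) - 1)) := by
  have hk2 : (2:ℝ) ≤ (k:ℝ) := by exact_mod_cast hk
  have hk1 : (1:ℝ) ≤ (k:ℝ) - 1 := by linarith
  have hkpos : (0:ℝ) < (k:ℝ) := by linarith
  have hkne : (k:ℝ) ≠ 0 := ne_of_gt hkpos
  have hk1pos : (0:ℝ) < (k:ℝ) - 1 := by linarith
  have hlog2 : (0:ℝ) < Real.log 2 := Real.log_pos (by norm_num)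
  set f : ℝ → ℝ := fun x => Real.exp (k * x) - 2 - 2 * x with hf
  have hderiv : ∀ x : ℝ, HasDerivAt f ((k:ℝ) * Real.exp (k * x) - 2) x := by
    intro x
    have h1 : HasDerivAt (fun x : ℝ => (k:ℝ) * x) (k:ℝ) x := by
      simpa using (hasDerivAt_id x).const_mul (k:ℝ)
    have h2 := h1.exp
    have h3 := (h2.sub_const 2).sub ((hasDerivAt_id x).const_mul 2)
    simpa [hf, mul_comm, Pi.sub_def] using h3
  have hcont : Continuous f := by
    apply Continuous.sub
    · exact (Real.continuous_exp.comp (continuous_const.mul continuous_id)).sub continuous_const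
    · exact continuous_const.mul continuous_id
  have hmono : StrictMonoOn f (Ici 0) := by
    apply strictMonoOn_of_deriv_pos (convex_Ici 0) hcont.continuousOn
    intro x hx
    rw [interior_Ici] at hx
    rw [(hderiv x).deriv]
    have h1 : (1:ℝ) < Real.exp ((k:ℝ) * x) := by
      rw [show (1:ℝ) = Real.exp 0 by simp]
      exact Real.exp_lt_exp.mpr (mul_pos hkpos hx)
    nlinarith
  -- endpoints
  set a : ℝ := Real.log 2 / k with ha
  set b : ℝ := Real.log 2 / ((k:ℝ) - 1) with hb
  have hapos : 0 < a := div_pos hlog2 hkpos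
  have hbpos : 0 < b := div_pos hlog2 hk1pos
  have hab : a < b := by
    apply div_lt_div_of_pos_left hlog2 hk1pos
    linarith
  have hfa : f a = -2 * a := by
    have : (k:ℝ) * a = Real.log 2 := by rw [ha]; field_simp [hkne]
    simp [hf, this, Real.exp_log]
  have hfaneg : f a < 0 := by rw [hfa]; linarith
  have hfb : 0 ≤ f b := by
    have hkb : (k:ℝ) * b = Real.log 2 + b := by
      have : ((k:ℝ) - 1) * b = Real.log 2 := by rw [hb]; field_simp [hk1pos.ne']
      nlinarith
    have hexp : Real.exp ((k:ℝ) * b) = 2 * Real.exp b := by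
      rw [hkb, Real.exp_add, Real.exp_log (by norm_num)]
    have h1 : b + 1 ≤ Real.exp b := Real.add_one_le_exp b
    simp only [hf]
    rw [hexp]
    nlinarith
  -- solutions characterised by f = 0
  have hsol : ∀ lam : ℝ, Real.exp (k * lam) / 2 = 1 + lam ↔ f lam = 0 := by
    intro lam
    simp only [hf]
    constructor <;> intro h <;> nlinarith [h]
  -- existence via IVT
  obtain ⟨c, hcmem, hfc⟩ := intermediate_value_Icc (le_of_lt hab) hcont.continuousOn
    (show (0:ℝ) ∈ Icc (f a) (f b) from ⟨le_of_lt hfaneg, hfb⟩)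
  have hca : a < c := by
    by_contra h
    push_neg at h
    have := hmono.le_iff_le (le_of_lt (lt_of_lt_of_le hapos (hcmem.1.trans (le_refl c)))) (le_of_lt hapos) |>.mpr h
    -- f c ≤ f a
    have : f c ≤ f a := hmono.monotoneOn (hcmem.1.trans_lt' hapos).le (le_of_lt hapos) h
    rw [hfc] at this
    linarith
  have hcpos : 0 < c := lt_trans hapos hca
  constructor
  · refine ⟨c, ⟨hcpos, (hsol c).mpr hfc⟩, ?_⟩
    rintro y ⟨hy, hyeq⟩
    have hfy : f y = 0 := (hsol y).mp hyeq
    exact hmono.injOn (le_of_lt hy) (le_of_lt hcpos) (by rw [hfy, hfc])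
  · intro lam hlam heq
    have hflam : f lam = 0 := (hsol lam).mp heq
    constructor
    · -- a < lam
      by_contra h
      push_neg at h
      have : f lam ≤ f a := hmono.monotoneOn (le_of_lt hlam) (le_of_lt hapos) h
      rw [hflam] at this; linarith
    · -- lam ≤ b
      by_contra h
      push_neg at h
      have : f b < f lam := hmono (le_of_lt hbpos) (le_of_lt hlam) h
      rw [hflam] at this; linarith
end
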